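/- arXiv:2002.02051 — 5 statements merged into one kernel-verified Lean document; each statement's English description precedes it below -/
import Mathlib

section
/- Let V be a finite-dimensional real inner product space with a symmetric positive definite operator A, and let V = Σ_i V_i be a (not necessarily direct) decomposition into subspaces with inclusions I_i : V_i → V. Define A_i on V_i by ⟨A_i u_i, v_i⟩ = ⟨A I_i u_i, I_i v_i⟩ and the additive Schwarz preconditioner D by D^{-1} = Σ_i I_i A_i^{-1} I_i^*. Then for every u ∈ V, ⟨D u, u⟩ equals the infimum over all decompositions u = Σ_i u_i with u_i ∈ V_i of Σ_i ⟨A_i u_i, u_i⟩. -/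
open scoped RealInnerProductSpace

/-- the additive Schwarz preconditioner `D`, defined through
`D⁻¹ = Σ_i I_i A_i⁻¹ I_i^*` (where `I_i^*` is the orthogonal projection onto `V_i`),
satisfies `⟨D u, u⟩ = inf { Σ_i ⟨A_i u_i, u_i⟩ : u = Σ_i u_i, u_i ∈ V_i }`. -/
theorem stmt0
    {V : Type*} [NormedAddCommGroup V] [InnerProductSpace ℝ V] [FiniteDimensional ℝ V]
    {ι : Type*} [Fintype ι]
    (Vsub : ι → Submodule ℝ V)
    (hspan : (⨆ i, Vsub i) = ⊤)
    (A : V →ₗ[ℝ] V)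
    (hAsym : ∀ u v : V, ⟪A u, v⟫ = ⟪u, A v⟫)
    (hApos : ∀ u : V, u ≠ 0 → 0 < ⟪A u, u⟫)
    -- `B i` is the restriction `A_i` of `A` to the subspace `V_i`
    (B C : ∀ i, Vsub i →ₗ[ℝ] Vsub i)
    (hB : ∀ i (x y : Vsub i), ⟪((B i x : V)), (y : V)⟫ = ⟪A (x : V), (y : V)⟫)
    -- `C i = A_i⁻¹`
    (hCB : ∀ i, (C i).comp (B i) = LinearMap.id)
    (hBC : ∀ i, (B i).comp (C i) = LinearMap.id)
    (D : V →ₗ[ℝ] V)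
    (hDsym : ∀ u v : V, ⟪D u, v⟫ = ⟪u, D v⟫)
    -- `D⁻¹ = Σ_i I_i A_i⁻¹ I_i^*`
    (hDinv : ∀ u : V, ∑ i, ((C i ((Vsub i).orthogonalProjection (D u)) : V)) = u)
    (u : V) :
    ⟪D u, u⟫ =
      sInf { s : ℝ | ∃ w : ι → V, (∀ i, w i ∈ Vsub i) ∧ (∑ i, w i) = u ∧
        s = ∑ i, ⟪A (w i), w i⟫ } := by
  classical
  set ustar : ∀ i, Vsub i := fun i => C i ((Vsub i).orthogonalProjection (D u)) with hustar
  -- nonnegativity of the quadratic form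
  have hnn : ∀ z : V, 0 ≤ ⟪A z, z⟫ := by
    intro z
    rcases eq_or_ne z 0 with h | h
    · simp [h]
    · exact (hApos z h).le
  -- arithmetic-geometric inequality for the A-form
  have key : ∀ x y : V, 2 * ⟪A x, y⟫ ≤ ⟪A x, x⟫ + ⟪A y, y⟫ := by
    intro x y
    have h := hnn (x - y)
    have hyx : ⟪A y, x⟫ = ⟪A x, y⟫ := by
      rw [hAsym y x, real_inner_comm]
    rw [map_sub, inner_sub_left, inner_sub_right, inner_sub_right, hyx] at h
    linarith
  -- the key property of ustar
  have hproj : ∀ i (w : V), w ∈ Vsub i → ⟪A ((ustar i : V)), w⟫ = ⟪D u, w⟫ := by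
    intro i w hw
    have h1 : ⟪A ((ustar i : V)), w⟫ = ⟪((B i (ustar i) : V)), w⟫ :=
      (hB i (ustar i) ⟨w, hw⟩).symm
    have h2 : B i (ustar i) = (Vsub i).orthogonalProjection (D u) := by
      have := congrArg (fun f => f ((Vsub i).orthogonalProjection (D u))) (hBC i)
      simpa using this
    have h3 := Submodule.starProjection_inner_eq_zero (K := Vsub i) (D u) w hw
    rw [inner_sub_left, sub_eq_zero, Submodule.starProjection_apply] at h3
    rw [h1, h2, h3]
  -- ustar gives a decomposition achieving ⟪D u, u⟫
  have hval : ∑ i, ⟪A ((ustar i : V)), ((ustar i : V))⟫ = ⟪D u, u⟫ := by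
    have : ∀ i, ⟪A ((ustar i : V)), ((ustar i : V))⟫ = ⟪D u, ((ustar i : V))⟫ :=
      fun i => hproj i _ (ustar i).2
    rw [Finset.sum_congr rfl fun i _ => this i, ← inner_sum, hDinv u]
  have hmem : ⟪D u, u⟫ ∈ { s : ℝ | ∃ w : ι → V, (∀ i, w i ∈ Vsub i) ∧ (∑ i, w i) = u ∧
      s = ∑ i, ⟪A (w i), w i⟫ } :=
    ⟨fun i => (ustar i : V), fun i => (ustar i).2, hDinv u, hval.symm⟩
  -- lower bound
  have hlb : ∀ s ∈ { s : ℝ | ∃ w : ι → V, (∀ i, w i ∈ Vsub i) ∧ (∑ i, w i) = u ∧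
      s = ∑ i, ⟪A (w i), w i⟫ }, ⟪D u, u⟫ ≤ s := by
    rintro s ⟨w, hw, hsum, rfl⟩
    have h1 : ⟪D u, u⟫ = ∑ i, ⟪A ((ustar i : V)), w i⟫ := by
      calc ⟪D u, u⟫ = ∑ i, ⟪D u, w i⟫ := by rw [← inner_sum, hsum]
        _ = ∑ i, ⟪A ((ustar i : V)), w i⟫ :=
            Finset.sum_congr rfl fun i _ => (hproj i (w i) (hw i)).symm
    have h2 : ∑ i, 2 * ⟪A ((ustar i : V)), w i⟫ ≤
        ∑ i, (⟪A ((ustar i : V)), ((ustar i : V))⟫ + ⟪A (w i), w i⟫) :=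
      Finset.sum_le_sum fun i _ => key _ _
    rw [← Finset.mul_sum, Finset.sum_add_distrib, hval] at h2
    rw [h1] at *
    linarith
  refine le_antisymm (le_csInf ⟨_, hmem⟩ hlb) (csInf_le ⟨_, hlb⟩ hmem)
end

section
/- Let V, V_h be real Hilbert spaces with V_h ⊆ V finite-dimensional, Q_h a finite-dimensional Hilbert space, and b : V × Q_h → ℝ a bounded bilinear form such that the pair (V_h, Q_h) satisfies the discrete inf-sup condition inf_{q_h ∈ Q_h} sup_{v_h ∈ V_h} b(v_h, q_h)/(‖v_h‖ ‖q_h‖) ≥ β > 0. Then there exists a bounded linear Fortin operator I_h : V → V_h such that b(I_h v, q_h) = b(v, q_h) for all v ∈ V and q_h ∈ Q_h, I_h v_h = v_h for all v_h ∈ V_h, and ‖I_h‖ is bounded in terms of β and the norm of b. -/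
open InnerProductSpace


/-- existence of a Fortin operator.  If the pair `(V_h, Q_h)` is
discretely inf-sup stable with constant `β` for the bounded bilinear form `b`,
then there is a bounded linear operator `I_h : V → V_h` preserving `b` in the
second argument, restricting to the identity on `V_h`, with norm bounded in
terms of `β` and the bound `M` of `b`. -/
theorem stmt6
    {V Q : Type*}
    [NormedAddCommGroup V] [InnerProductSpace ℝ V] [CompleteSpace V]
    [NormedAddCommGroup Q] [InnerProductSpace ℝ Q] [FiniteDimensional ℝ Q]
    (Vh : Submodule ℝ V) [FiniteDimensional ℝ Vh]
    (b : V →ₗ[ℝ] Q →ₗ[ℝ] ℝ)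
    (M β : ℝ) (hM : 0 < M) (hβ : 0 < β)
    (hbbdd : ∀ (v : V) (q : Q), |b v q| ≤ M * ‖v‖ * ‖q‖)
    (hinfsup : ∀ q : Q, q ≠ 0 → ∃ v : V, v ∈ Vh ∧ v ≠ 0 ∧ β * ‖v‖ * ‖q‖ ≤ b v q) :
    ∃ Ih : V →L[ℝ] V,
      (∀ v : V, Ih v ∈ Vh) ∧
      (∀ (v : V) (q : Q), b (Ih v) q = b v q) ∧
      (∀ v ∈ Vh, Ih v = v) ∧
      ‖Ih‖ ≤ 1 + M / β := by
  classical
  -- The Riesz representer map S : V →ₗ Q with ⟪S v, q⟫ = b v q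
  let S : V →ₗ[ℝ] Q :=
    { toFun := fun v => (toDual ℝ Q).symm (LinearMap.toContinuousLinearMap (b v))
      map_add' := by
        intro x y
        apply ext_inner_right ℝ
        intro q
        simp [toDual_symm_apply, inner_add_left]
      map_smul' := by
        intro c x
        apply ext_inner_right ℝ
        intro q
        simp [toDual_symm_apply, inner_smul_left] }
  have hS : ∀ (v : V) (q : Q), ⟪S v, q⟫_ℝ = b v q := by
    intro v q
    simp [S, toDual_symm_apply]
  -- norm bound for S
  have hSnorm : ∀ v : V, ‖S v‖ ≤ M * ‖v‖ := by
    intro v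
    by_cases h : S v = 0
    · simp [h]; positivity
    · have h1 : ‖S v‖ * ‖S v‖ = ⟪S v, S v⟫_ℝ := (real_inner_self_eq_norm_mul_norm _).symm
      have h2 : ⟪S v, S v⟫_ℝ = b v (S v) := hS v (S v)
      have h3 : b v (S v) ≤ M * ‖v‖ * ‖S v‖ := le_trans (le_abs_self _) (hbbdd v (S v))
      have h4 : (0:ℝ) < ‖S v‖ := norm_pos_iff.mpr h
      nlinarith
  -- T : Vh →ₗ Q
  let T : Vh →ₗ[ℝ] Q := S ∘ₗ Vh.subtype
  let T' : Q →ₗ[ℝ] Vh := LinearMap.adjoint T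
  have hT : ∀ (x : Vh) (q : Q), ⟪T x, q⟫_ℝ = b (x : V) q := fun x q => hS x q
  have hT' : ∀ (x : Vh) (q : Q), ⟪x, T' q⟫_ℝ = b (x : V) q := by
    intro x q
    rw [real_inner_comm, LinearMap.adjoint_inner_left, real_inner_comm]
    exact hT x q
  -- lower bound for the adjoint
  have hlow : ∀ q : Q, β * ‖q‖ ≤ ‖T' q‖ := by
    intro q
    by_cases hq : q = 0
    · simp [hq]
    · obtain ⟨v, hvVh, hv0, hvb⟩ := hinfsup q hq
      have h1 : b v q = ⟪(⟨v, hvVh⟩ : Vh), T' q⟫_ℝ := (hT' ⟨v, hvVh⟩ q).symm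
      have h2 : ⟪(⟨v, hvVh⟩ : Vh), T' q⟫_ℝ ≤ ‖(⟨v, hvVh⟩ : Vh)‖ * ‖T' q‖ :=
        real_inner_le_norm _ _
      have h3 : ‖(⟨v, hvVh⟩ : Vh)‖ = ‖v‖ := rfl
      have h4 : (0:ℝ) < ‖v‖ := norm_pos_iff.mpr hv0
      rw [h3] at h2
      have h5 : β * ‖v‖ * ‖q‖ ≤ ‖v‖ * ‖T' q‖ := by
        calc β * ‖v‖ * ‖q‖ ≤ b v q := hvb
          _ = _ := h1
          _ ≤ _ := h2
      have := (mul_le_mul_iff_right₀ h4).mp (by linarith [h5] : ‖v‖ * (β * ‖q‖) ≤ ‖v‖ * ‖T' q‖)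
      linarith
  -- G = T ∘ T' is bijective
  let G : Q →ₗ[ℝ] Q := T ∘ₗ T'
  have hGinj : Function.Injective G := by
    rw [← LinearMap.ker_eq_bot]
    rw [LinearMap.ker_eq_bot']
    intro q hq
    by_contra hq0
    have h1 : ⟪T' q, T' q⟫_ℝ = ⟪q, G q⟫_ℝ := by
      rw [real_inner_comm, LinearMap.adjoint_inner_left]
      rfl
    rw [hq, inner_zero_right] at h1
    have h2 : T' q = 0 := by
      rwa [inner_self_eq_zero] at h1
    have := hlow q
    rw [h2, norm_zero] at this
    have : β * ‖q‖ > 0 := mul_pos hβ (norm_pos_iff.mpr hq0)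
    linarith
  have hGbij : Function.Bijective G := ⟨hGinj, LinearMap.injective_iff_surjective.mp hGinj⟩
  let e : Q ≃ₗ[ℝ] Q := LinearEquiv.ofBijective G hGbij
  -- correction operator w : V →ₗ Vh
  let w : V →ₗ[ℝ] Vh := T' ∘ₗ (e.symm : Q →ₗ[ℝ] Q) ∘ₗ S
  have hTw : ∀ u : V, T (w u) = S u := by
    intro u
    show G (e.symm (S u)) = S u
    exact e.apply_symm_apply (S u)
  have hbw : ∀ (u : V) (q : Q), b ((w u : V)) q = b u q := by
    intro u q
    rw [← hT (w u) q, hTw, hS]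
  have hwnorm : ∀ u : V, ‖(w u : V)‖ ≤ (M / β) * ‖u‖ := by
    intro u
    have hcoe : ‖(w u : V)‖ = ‖w u‖ := rfl
    rw [hcoe]
    by_cases h : w u = 0
    · simp [h]; positivity
    · have hx : (0:ℝ) < ‖w u‖ := norm_pos_iff.mpr h
      set q0 : Q := e.symm (S u) with hq0
      have hwu : w u = T' q0 := rfl
      have h1 : ‖w u‖ * ‖w u‖ = ⟪w u, w u⟫_ℝ := (real_inner_self_eq_norm_mul_norm _).symm
      have h2 : ⟪w u, w u⟫_ℝ = ⟪q0, S u⟫_ℝ := by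
        rw [hwu]; nth_rewrite 1 [real_inner_comm]
        rw [LinearMap.adjoint_inner_left]
        rw [show T (T' q0) = S u from hTw u]
      have h3 : ⟪q0, S u⟫_ℝ ≤ ‖q0‖ * ‖S u‖ := real_inner_le_norm _ _
      have h4 : β * ‖q0‖ ≤ ‖w u‖ := by rw [hwu]; exact hlow q0
      have h5 : ‖S u‖ ≤ M * ‖u‖ := hSnorm u
      have h6 : (0:ℝ) ≤ ‖q0‖ := norm_nonneg _
      have h7 : (0:ℝ) ≤ ‖u‖ := norm_nonneg _
      rw [div_mul_eq_mul_div, le_div_iff₀ hβ]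
      nlinarith [mul_le_mul_of_nonneg_right h4 (norm_nonneg (S u)),
        mul_le_mul_of_nonneg_left h5 hx.le, hx.le]
  -- projection part
  let P : V →ₗ[ℝ] V := Vh.subtype ∘ₗ (Submodule.orthogonalProjectionOnto Vh : V →L[ℝ] Vh).toLinearMap
  have hPmem : ∀ v : V, P v ∈ Vh := fun v => (Submodule.orthogonalProjectionOnto Vh v).2
  have hPself : ∀ v ∈ Vh, P v = v := by
    intro v hv
    exact Submodule.starProjection_eq_self_iff.mpr hv
  have hPnorm : ∀ v : V, ‖P v‖ ≤ ‖v‖ ∧ ‖v - P v‖ ≤ ‖v‖ := by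
    intro v
    have horth : ⟪v - P v, P v⟫_ℝ = 0 :=
      Submodule.starProjection_inner_eq_zero v (P v) (hPmem v)
    have hpyth : ‖v‖ ^ 2 = ‖v - P v‖ ^ 2 + ‖P v‖ ^ 2 := by
      have := norm_add_sq_real (v - P v) (P v)
      simp only [sub_add_cancel] at this
      rw [this, horth]
      ring
    constructor
    · nlinarith [norm_nonneg (P v), norm_nonneg v, norm_nonneg (v - P v), sq_nonneg (‖v - P v‖)]
    · nlinarith [norm_nonneg (P v), norm_nonneg v, norm_nonneg (v - P v), sq_nonneg (‖P v‖)]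
  -- the Fortin operator as a linear map
  let F : V →ₗ[ℝ] V := P + (Vh.subtype ∘ₗ w) ∘ₗ (LinearMap.id - P)
  have hF : ∀ v : V, F v = P v + (w (v - P v) : V) := fun v => rfl
  have hFnorm : ∀ v : V, ‖F v‖ ≤ (1 + M / β) * ‖v‖ := by
    intro v
    rw [hF]
    calc ‖P v + (w (v - P v) : V)‖ ≤ ‖P v‖ + ‖(w (v - P v) : V)‖ := norm_add_le _ _
      _ ≤ ‖v‖ + (M / β) * ‖v - P v‖ := add_le_add (hPnorm v).1 (hwnorm _)
      _ ≤ ‖v‖ + (M / β) * ‖v‖ := by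
          have : (0:ℝ) ≤ M / β := by positivity
          nlinarith [(hPnorm v).2]
      _ = (1 + M / β) * ‖v‖ := by ring
  have hC : (0:ℝ) ≤ 1 + M / β := by positivity
  refine ⟨F.mkContinuous (1 + M / β) hFnorm, ?_, ?_, ?_, ?_⟩
  · intro v
    rw [show (F.mkContinuous (1 + M / β) hFnorm) v = F v from rfl, hF]
    exact Vh.add_mem (hPmem v) (w (v - P v)).2
  · intro v q
    rw [show (F.mkContinuous (1 + M / β) hFnorm) v = F v from rfl, hF]
    rw [map_add, LinearMap.add_apply, hbw, map_sub, LinearMap.sub_apply]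
    ring
  · intro v hv
    rw [show (F.mkContinuous (1 + M / β) hFnorm) v = F v from rfl, hF, hPself v hv]
    simp
  · exact F.mkContinuous_norm_le hC hFnorm
end

section
/- Gluing of Fortin operators: Let V, V_h ⊆ V be Hilbert spaces with V_h finite-dimensional, Q_h a finite-dimensional space with decomposition Q_h = Q̃_h ⊕ (⊕_K Q_h(K)) (orthogonal direct sum over a finite index set of 'macro cells' K), and b : V × Q_h → ℝ bilinear and bounded. Suppose: (a) there is a bounded linear operator Ĩ_h : V → V_h with Ĩ_h v_h = v_h for v_h ∈ V_h and b(Ĩ_h v, q̃) = b(v, q̃) for all q̃ ∈ Q̃_h; (b) for each K there are subspaces V_{h,0}(K) ⊆ V_h, restriction maps r_K : V → V(K), and bounded linear operators I_h^K : V(K) → V_{h,0}(K) with I_h^K w_h = w_h for w_h ∈ V_{h,0}(K) and b-preservation against Q_h(K); (c) b(w, q̃) = 0 for all w ∈ V_{h,0}(K) and q̃ ∈ Q̃_h, and b(w, q') = 0 for w ∈ V_{h,0}(K), q' ∈ Q_h(K') with K' ≠ K. Then I_h(v) := Ĩ_h v + Σ_K ι_K I_h^K (r_K(v − Ĩ_h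 v)) is a bounded linear operator V → V_h with I_h v_h = v_h for all v_h ∈ V_h and b(I_h v, q) = b(v, q) for all q ∈ Q_h and v ∈ V. -/
/-- gluing of Fortin operators.  Given a macro-level Fortin operator
`Ĩ_h = It` preserving `b` against the macro-constant pressures `Q̃_h = Qt`, and
local Fortin operators `J k` (the composites `ι_K ∘ I_h^K ∘ r_K`) valued in the
local spaces `V_{h,0}(K)`, preserving `b` against local pressures `Q_h(K)`, with
the localisation assumptions that local corrections do not interact with
macro-constant pressures nor with local pressures of other macro cells, the glued
operator `I_h(v) = Ĩ_h v + Σ_K J_K (v − Ĩ_h v)` maps into `V_h`, restricts to the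
identity on `V_h`, and preserves `b` against all of `Q_h`. -/
theorem stmt7
    {V Q : Type*}
    [NormedAddCommGroup V] [InnerProductSpace ℝ V] [CompleteSpace V]
    [NormedAddCommGroup Q] [NormedSpace ℝ Q]
    {κ : Type*} [Fintype κ]
    (Vh : Submodule ℝ V) [FiniteDimensional ℝ Vh]
    (Vh0 : κ → Submodule ℝ V) (hVh0 : ∀ k, Vh0 k ≤ Vh)
    (Qt : Submodule ℝ Q) (Qloc : κ → Submodule ℝ Q)
    (b : V →L[ℝ] Q →L[ℝ] ℝ)
    -- `Q_h = Q̃_h ⊕ (⊕_K Q_h(K))`: every pressure decomposes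
    (hQdecomp : ∀ q : Q, ∃ qt ∈ Qt, ∃ ql : κ → Q,
      (∀ k, ql k ∈ Qloc k) ∧ q = qt + ∑ k, ql k)
    -- (a) the macro-level Fortin operator
    (It : V →L[ℝ] V)
    (hItVh : ∀ v : V, It v ∈ Vh)
    (hItid : ∀ v ∈ Vh, It v = v)
    (hItb : ∀ v : V, ∀ qt ∈ Qt, b (It v) qt = b v qt)
    -- (b) the local Fortin operators
    (J : κ → (V →L[ℝ] V))
    (hJrange : ∀ k (v : V), J k v ∈ Vh0 k)
    (hJid : ∀ k, ∀ w ∈ Vh0 k, J k w = w)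
    (hJb : ∀ k (v : V), ∀ q ∈ Qloc k, b (J k v) q = b v q)
    -- (c) localisation assumptions
    (hzero_t : ∀ k, ∀ w ∈ Vh0 k, ∀ qt ∈ Qt, b w qt = 0)
    (hzero_cross : ∀ k k', k ≠ k' → ∀ w ∈ Vh0 k, ∀ q ∈ Qloc k', b w q = 0) :
    (∀ v : V, (It v + ∑ k, J k (v - It v)) ∈ Vh) ∧
    (∀ vh ∈ Vh, It vh + ∑ k, J k (vh - It vh) = vh) ∧
    (∀ (v : V) (q : Q), b (It v + ∑ k, J k (v - It v)) q = b v q) := by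
  refine ⟨?_, ?_, ?_⟩
  · intro v
    exact Vh.add_mem (hItVh v) (Vh.sum_mem fun k _ => hVh0 k (hJrange k _))
  · intro vh hvh
    simp [hItid vh hvh]
  · intro v q
    obtain ⟨qt, hqt, ql, hql, rfl⟩ := hQdecomp q
    have key : ∀ k', b (It v + ∑ k, J k (v - It v)) (ql k') = b v (ql k') := by
      intro k'
      have hsum : ∑ k, b (J k (v - It v)) (ql k')
          = b (J k' (v - It v)) (ql k') := by
        refine Finset.sum_eq_single k' (fun k _ hk => ?_) (by simp)
        exact hzero_cross k k' hk _ (hJrange k _) _ (hql k')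
      rw [map_add, ContinuousLinearMap.add_apply, map_sum,
        ContinuousLinearMap.sum_apply, hsum, hJb k' _ _ (hql k'), map_sub,
        ContinuousLinearMap.sub_apply]
      ring
    have keyt : b (It v + ∑ k, J k (v - It v)) qt = b v qt := by
      simp only [map_add, map_sum, ContinuousLinearMap.add_apply,
        ContinuousLinearMap.sum_apply, hItb v qt hqt]
      rw [Finset.sum_eq_zero (fun k _ => hzero_t k _ (hJrange k _) qt hqt)]
      ring
    simp only [map_add, map_sum, ContinuousLinearMap.add_apply,
      ContinuousLinearMap.sum_apply] at keyt key ⊢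
    rw [keyt]
    congr 1
    exact Finset.sum_congr rfl fun k' _ => key k'
end

section
/- Parameter-dependent Jacobi bound: Let V_h be a finite element space spanned by basis functions {φ_i} and a_{h,γ}(u,v) = a(u,v) + γ c(u,v) with a(u,u) ≤ C₁‖u‖_1^2, c(u,u) ≤ C₁‖u‖_1^2, the inverse inequality ‖u‖_1 ≤ C₂ h^{-1}‖u‖_0 on V_h, and the L² stability of the basis Σ_i ‖u_i‖_0^2 ≤ C₃ ‖u_h‖_0^2 for the unique decomposition u_h = Σ_i u_i along one-dimensional subspaces V_i = span{φ_i}. If moreover ‖u_h‖_0^2 ≤ C₄ a_{h,γ}(u_h, u_h), then the Jacobi additive Schwarz operator D_{h,γ} satisfies ‖u_h‖_{D_{h,γ}}^2 ≤ C (1+γ) h^{-2} ‖u_h‖_{A_{h,γ}}^2 with C = 2C₁C₂²C₃C₄, i.e. the equivalence constant degrades linearly in γ. -/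
/-- parameter-dependent Jacobi bound.  For the unique decomposition
of `u` along the one-dimensional subspaces spanned by the basis `{φ_i}`, the
Jacobi additive Schwarz quadratic form satisfies
`‖u‖²_{D_{h,γ}} ≤ 2C₁C₂²C₃C₄ (1+γ) h⁻² ‖u‖²_{A_{h,γ}}`. -/
theorem stmt10
    {V : Type*} [AddCommGroup V] [Module ℝ V]
    {ι : Type*} [Fintype ι]
    (φ : Module.Basis ι ℝ V)
    (a c : V →ₗ[ℝ] V →ₗ[ℝ] ℝ)
    (hasym : ∀ u v, a u v = a v u) (hcsym : ∀ u v, c u v = c v u)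
    (hapos : ∀ u, 0 ≤ a u u) (hcpos : ∀ u, 0 ≤ c u u)
    (n0 n1 : V → ℝ)
    (hn0nonneg : ∀ u, 0 ≤ n0 u) (hn1nonneg : ∀ u, 0 ≤ n1 u)
    (γ h C₁ C₂ C₃ C₄ : ℝ)
    (hγ : 0 ≤ γ) (hh : 0 < h)
    (hC₁ : 0 < C₁) (hC₂ : 0 < C₂) (hC₃ : 0 < C₃) (hC₄ : 0 < C₄)
    (ha : ∀ u, a u u ≤ C₁ * (n1 u) ^ 2)
    (hc : ∀ u, c u u ≤ C₁ * (n1 u) ^ 2)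
    -- inverse inequality on `V_h`
    (hinv : ∀ u, n1 u ≤ C₂ * h⁻¹ * n0 u)
    -- `L²` stability of the basis decomposition
    (hbasis : ∀ u : V, ∑ i, (n0 (φ.repr u i • φ i)) ^ 2 ≤ C₃ * (n0 u) ^ 2)
    (hlower : ∀ u : V, (n0 u) ^ 2 ≤ C₄ * (a u u + γ * c u u)) :
    ∀ u : V,
      ∑ i, (a (φ.repr u i • φ i) (φ.repr u i • φ i)
              + γ * c (φ.repr u i • φ i) (φ.repr u i • φ i)) ≤
        2 * C₁ * C₂ ^ 2 * C₃ * C₄ * (1 + γ) * h⁻¹ ^ 2 * (a u u + γ * c u u) := by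
  intro u
  have key : ∀ v : V, a v v + γ * c v v ≤ C₁ * (1 + γ) * C₂ ^ 2 * h⁻¹ ^ 2 * (n0 v) ^ 2 := by
    intro v
    have h1 : a v v + γ * c v v ≤ C₁ * (1 + γ) * (n1 v) ^ 2 := by
      have := ha v; have := hc v
      nlinarith [mul_le_mul_of_nonneg_left (hc v) hγ]
    have h2 : (n1 v) ^ 2 ≤ (C₂ * h⁻¹ * n0 v) ^ 2 := by
      have := hinv v
      have hn : 0 ≤ n1 v := hn1nonneg v
      nlinarith
    have h3 : C₁ * (1 + γ) * (n1 v) ^ 2 ≤ C₁ * (1 + γ) * (C₂ * h⁻¹ * n0 v) ^ 2 := by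
      apply mul_le_mul_of_nonneg_left h2
      positivity
    calc a v v + γ * c v v ≤ C₁ * (1 + γ) * (C₂ * h⁻¹ * n0 v) ^ 2 := h1.trans h3
      _ = C₁ * (1 + γ) * C₂ ^ 2 * h⁻¹ ^ 2 * (n0 v) ^ 2 := by ring
  have hsum : ∑ i, (a (φ.repr u i • φ i) (φ.repr u i • φ i)
      + γ * c (φ.repr u i • φ i) (φ.repr u i • φ i)) ≤
      C₁ * (1 + γ) * C₂ ^ 2 * h⁻¹ ^ 2 * ∑ i, (n0 (φ.repr u i • φ i)) ^ 2 := by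
    rw [Finset.mul_sum]
    exact Finset.sum_le_sum fun i _ => key _
  have hK : (0:ℝ) ≤ C₁ * (1 + γ) * C₂ ^ 2 * h⁻¹ ^ 2 := by positivity
  have h4 : C₁ * (1 + γ) * C₂ ^ 2 * h⁻¹ ^ 2 * ∑ i, (n0 (φ.repr u i • φ i)) ^ 2 ≤
      C₁ * (1 + γ) * C₂ ^ 2 * h⁻¹ ^ 2 * (C₃ * (n0 u) ^ 2) :=
    mul_le_mul_of_nonneg_left (hbasis u) hK
  have h5 : (n0 u) ^ 2 ≤ C₄ * (a u u + γ * c u u) := hlower u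
  have hq : 0 ≤ a u u + γ * c u u := by
    have := hapos u; have := hcpos u; nlinarith
  have h6 : C₁ * (1 + γ) * C₂ ^ 2 * h⁻¹ ^ 2 * (C₃ * (n0 u) ^ 2) ≤
      C₁ * (1 + γ) * C₂ ^ 2 * h⁻¹ ^ 2 * (C₃ * (C₄ * (a u u + γ * c u u))) := by
    apply mul_le_mul_of_nonneg_left _ hK
    exact mul_le_mul_of_nonneg_left h5 hC₃.le
  have h7 : C₁ * (1 + γ) * C₂ ^ 2 * h⁻¹ ^ 2 * (C₃ * (C₄ * (a u u + γ * c u u))) ≤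
      2 * C₁ * C₂ ^ 2 * C₃ * C₄ * (1 + γ) * h⁻¹ ^ 2 * (a u u + γ * c u u) := by
    have : C₁ * (1 + γ) * C₂ ^ 2 * h⁻¹ ^ 2 * C₃ * C₄ ≤
        2 * C₁ * C₂ ^ 2 * C₃ * C₄ * (1 + γ) * h⁻¹ ^ 2 := by
      have hX : (0:ℝ) ≤ C₁ * (1 + γ) * C₂ ^ 2 * h⁻¹ ^ 2 * C₃ * C₄ := by positivity
      linarith
    calc C₁ * (1 + γ) * C₂ ^ 2 * h⁻¹ ^ 2 * (C₃ * (C₄ * (a u u + γ * c u u)))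
        = C₁ * (1 + γ) * C₂ ^ 2 * h⁻¹ ^ 2 * C₃ * C₄ * (a u u + γ * c u u) := by ring
      _ ≤ _ := mul_le_mul_of_nonneg_right this hq
  linarith
end

section
/- Robust prolongation continuity: Let V_H, V_h be finite-dimensional Hilbert spaces with energy norms ‖u‖_{A_{H,γ}}^2 = ‖u‖_{1,H}^2 + γ‖Π_{Q_H} div_H u‖_0^2 and ‖u‖_{A_{h,γ}}^2 = ‖u‖_{1,h}^2 + γ‖Π_{Q_h} div_h u‖_0^2. Suppose Q_h = Q̃_H ⊕ Q̂_h orthogonally with Q̃_H ⊆ Q_H; P_H : V_H → V_h is ‖·‖_1-bounded and satisfies Π_{Q̃_H} div_h (P_H v_H) = Π_{Q̃_H} div_H v_H; V̂_h ⊆ V_h satisfies Π_{Q̃_H} div_h v̂ = 0 for all v̂ ∈ V̂_h; and there is a bounded linear operator I : V_h → V̂_h with Π_{Q̂_h} div_h (I v) = Π_{Q̂_h} div_h v. For u_H ∈ V_H let ũ_h ∈ V̂_h be the unique minimizer of J(v) = a_h(v,v) + γ ‖Π_{Q̂_h} div_h(P_H u_H − v)‖_0^2 over V̂_h, where a_h(v,v)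 is equivalent to ‖v‖_{1,h}^2. Then ‖P_H u_H − ũ_h‖_{A_{h,γ}}^2 ≤ C ‖u_H‖_{A_{H,γ}}^2 with C independent of γ ≥ 0. -/
open scoped RealInnerProductSpace

set_option maxHeartbeats 1600000 in
/-- robust prolongation continuity.  With
`Q_h = Q̃_H ⊕ Q̂_h` (orthogonally), `Q̃_H ⊆ Q_H`, a `‖·‖₁`-bounded prolongation
`P` preserving the divergence against `Q̃_H`, a correction space `V̂_h` whose
divergences vanish against `Q̃_H`, and a bounded operator `I` into `V̂_h`
preserving the `Q̂_h`-part of the divergence, the corrected prolongation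
`ũ ↦ P u_H − ũ` (with `ũ` the minimiser of the penalised energy over `V̂_h`)
is continuous in the `γ`-energy norms with a constant independent of `γ ≥ 0`. -/
theorem stmt11
    {VH Vh Q0 : Type*}
    [NormedAddCommGroup VH] [InnerProductSpace ℝ VH] [FiniteDimensional ℝ VH]
    [NormedAddCommGroup Vh] [InnerProductSpace ℝ Vh] [FiniteDimensional ℝ Vh]
    [NormedAddCommGroup Q0] [InnerProductSpace ℝ Q0] [FiniteDimensional ℝ Q0]
    (QH Qh Qt Qhat : Submodule ℝ Q0)
    (hQtQH : Qt ≤ QH) (hQtQh : Qt ≤ Qh) (hQhatQh : Qhat ≤ Qh)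
    (horth : ∀ qt ∈ Qt, ∀ qh ∈ Qhat, ⟪qt, qh⟫ = (0 : ℝ))
    (hQsum : Qt ⊔ Qhat = Qh)
    (divH : VH →ₗ[ℝ] Q0) (divh : Vh →ₗ[ℝ] Q0)
    (hdivH : ∀ v, divH v ∈ QH) (hdivh : ∀ v, divh v ∈ Qh)
    (n1H : VH → ℝ) (n1h : Vh → ℝ)
    (hn1Hnonneg : ∀ v, 0 ≤ n1H v) (hn1hnonneg : ∀ v, 0 ≤ n1h v)
    (ah : Vh →ₗ[ℝ] Vh →ₗ[ℝ] ℝ)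
    (ca cb CP CI : ℝ) (hca : 0 < ca) (hcb : 0 < cb) (hCP : 0 < CP) (hCI : 0 < CI)
    (hahlow : ∀ v, ca * (n1h v) ^ 2 ≤ ah v v)
    (hahup : ∀ v, ah v v ≤ cb * (n1h v) ^ 2)
    (P : VH →ₗ[ℝ] Vh)
    (hPbdd : ∀ v, n1h (P v) ≤ CP * n1H v)
    (hPdiv : ∀ v : VH, (Qt.orthogonalProjection (divh (P v)) : Q0) =
      (Qt.orthogonalProjection (divH v) : Q0))
    (Vhat : Submodule ℝ Vh)
    (hVhatdiv : ∀ v ∈ Vhat, (Qt.orthogonalProjection (divh v) : Q0) = 0)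
    (I : Vh →ₗ[ℝ] Vh)
    (hIrange : ∀ v, I v ∈ Vhat)
    (hIbdd : ∀ v, n1h (I v) ≤ CI * n1h v)
    (hIdiv : ∀ v : Vh, (Qhat.orthogonalProjection (divh (I v)) : Q0) =
      (Qhat.orthogonalProjection (divh v) : Q0)) :
    ∃ C : ℝ, 0 < C ∧ ∀ γ : ℝ, 0 ≤ γ → ∀ uH : VH, ∀ ut : Vh,
      ut ∈ Vhat →
      -- `ut` minimises `J(v) = a_h(v,v) + γ ‖Π_{Q̂_h} div_h (P u_H − v)‖²` over `V̂_h`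
      (∀ v ∈ Vhat,
        ah ut ut + γ * ‖(Qhat.orthogonalProjection (divh (P uH - ut)) : Q0)‖ ^ 2 ≤
          ah v v + γ * ‖(Qhat.orthogonalProjection (divh (P uH - v)) : Q0)‖ ^ 2) →
      (n1h (P uH - ut)) ^ 2 + γ * ‖divh (P uH - ut)‖ ^ 2 ≤
        C * ((n1H uH) ^ 2 + γ * ‖divH uH‖ ^ 2) := by

  classical
  set K1 : ℝ := cb * (CI * CP) ^ 2 with hK1
  refine ⟨2 * (cb * CP ^ 2 + K1) / ca + K1 + 1, by positivity, ?_⟩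
  intro γ hγ uH ut hut hmin
  set w : Vh := P uH - ut with hw
  -- the penalty term at the test function `I (P uH)` vanishes
  have hzero : (Qhat.orthogonalProjection (divh (P uH - I (P uH))) : Q0) = 0 := by
    have h := hIdiv (P uH)
    rw [map_sub, map_sub, Submodule.coe_sub, h, sub_self]
  have hItest := hmin (I (P uH)) (hIrange _)
  rw [hzero] at hItest
  simp only [norm_zero, ne_eq, OfNat.ofNat_ne_zero, not_false_eq_true, zero_pow,
    mul_zero, add_zero] at hItest
  -- bound on the test energy
  have hnPu : n1h (P uH) ≤ CP * n1H uH := hPbdd uH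
  have hnI : n1h (I (P uH)) ≤ CI * CP * n1H uH := by
    calc n1h (I (P uH)) ≤ CI * n1h (P uH) := hIbdd _
    _ ≤ CI * (CP * n1H uH) := by
        have := hCI.le
        nlinarith
    _ = CI * CP * n1H uH := by ring
  have hnI2 : (n1h (I (P uH))) ^ 2 ≤ (CI * CP * n1H uH) ^ 2 :=
    pow_le_pow_left₀ (hn1hnonneg _) hnI 2
  have hEtest : (ah (I (P uH))) (I (P uH)) ≤ K1 * n1H uH ^ 2 := by
    have := hahup (I (P uH))
    have h2 : cb * (n1h (I (P uH))) ^ 2 ≤ cb * (CI * CP * n1H uH) ^ 2 := by nlinarith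
    calc (ah (I (P uH))) (I (P uH)) ≤ cb * (n1h (I (P uH))) ^ 2 := this
    _ ≤ cb * (CI * CP * n1H uH) ^ 2 := h2
    _ = K1 * n1H uH ^ 2 := by rw [hK1]; ring
  have hutE : 0 ≤ (ah ut) ut := le_trans (by positivity) (hahlow ut)
  have hPennonneg : 0 ≤ γ * ‖(Qhat.orthogonalProjection (divh w) : Q0)‖ ^ 2 := by
    positivity
  have hA : (ah ut) ut ≤ K1 * n1H uH ^ 2 := by linarith
  have hB : γ * ‖(Qhat.orthogonalProjection (divh w) : Q0)‖ ^ 2 ≤ K1 * n1H uH ^ 2 := by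
    linarith
  -- quadratic form "parallelogram" bound
  have hexp : (ah w) w + (ah (P uH + ut)) (P uH + ut)
      = 2 * (ah (P uH)) (P uH) + 2 * (ah ut) ut := by
    simp only [hw, map_sub, map_add, LinearMap.sub_apply, LinearMap.add_apply]
    ring
  have hsumnn : 0 ≤ (ah (P uH + ut)) (P uH + ut) :=
    le_trans (by positivity) (hahlow _)
  have hPuE : (ah (P uH)) (P uH) ≤ cb * CP ^ 2 * n1H uH ^ 2 := by
    have h1 := hahup (P uH)
    have h2 : (n1h (P uH)) ^ 2 ≤ (CP * n1H uH) ^ 2 :=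
      pow_le_pow_left₀ (hn1hnonneg _) hnPu 2
    nlinarith
  have hwE : ca * (n1h w) ^ 2 ≤ 2 * (cb * CP ^ 2 + K1) * n1H uH ^ 2 := by
    have := hahlow w
    nlinarith
  have hn1w : (n1h w) ^ 2 ≤ 2 * (cb * CP ^ 2 + K1) / ca * n1H uH ^ 2 := by
    rw [div_mul_eq_mul_div, le_div_iff₀ hca]
    linarith
  -- orthogonal decomposition of `divh w`
  have hmem : divh w ∈ Qt ⊔ Qhat := by rw [hQsum]; exact hdivh w
  obtain ⟨a, ha, b, hb, hab⟩ := Submodule.mem_sup.mp hmem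
  have hbo : b ∈ Qtᗮ := (Submodule.mem_orthogonal Qt b).mpr (fun u hu => horth u hu b hb)
  have hao : a ∈ Qhatᗮ := (Submodule.mem_orthogonal Qhat a).mpr
    (fun u hu => by rw [real_inner_comm]; exact horth a ha u hu)
  have hPta : (Qt.orthogonalProjection (divh w) : Q0) = a := by
    rw [← hab, map_add, Submodule.coe_add,
      (Qt.orthogonalProjectionOnto_mem_subspace_eq_self ⟨a, ha⟩ : Qt.orthogonalProjection a = ⟨a, ha⟩),
      Submodule.orthogonalProjectionOnto_apply_of_mem_orthogonal hbo]
    simp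
  have hPhb : (Qhat.orthogonalProjection (divh w) : Q0) = b := by
    rw [← hab, map_add, Submodule.coe_add,
      (Qhat.orthogonalProjectionOnto_mem_subspace_eq_self ⟨b, hb⟩ : Qhat.orthogonalProjection b = ⟨b, hb⟩),
      Submodule.orthogonalProjectionOnto_apply_of_mem_orthogonal hao]
    simp
  have hnormsq : ‖divh w‖ ^ 2 = ‖a‖ ^ 2 + ‖b‖ ^ 2 := by
    rw [← hab, norm_add_sq_real, horth a ha b hb]
    ring
  -- identify the Qt-part
  have hQtpart : a = (Qt.orthogonalProjection (divH uH) : Q0) := by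
    rw [← hPta, hw, map_sub, map_sub, Submodule.coe_sub, hPdiv uH,
      hVhatdiv ut hut, sub_zero]
  have hanorm : ‖a‖ ≤ ‖divH uH‖ := by
    rw [hQtpart, ← Submodule.coe_norm]
    have h2 := Qt.orthogonalProjection.le_opNorm (divH uH)
    have h1 := Submodule.orthogonalProjectionOnto_norm_le Qt
    have h3 : (0:ℝ) ≤ ‖divH uH‖ := norm_nonneg _
    have h4 := mul_le_mul_of_nonneg_right h1 h3
    rw [one_mul] at h4
    exact le_trans h2 h4
  have hanorm2 : ‖a‖ ^ 2 ≤ ‖divH uH‖ ^ 2 :=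
    pow_le_pow_left₀ (norm_nonneg _) hanorm 2
  have hbnorm2 : γ * ‖b‖ ^ 2 ≤ K1 * n1H uH ^ 2 := by rw [← hPhb]; exact hB
  have hdiv : γ * ‖divh w‖ ^ 2 ≤ γ * ‖divH uH‖ ^ 2 + K1 * n1H uH ^ 2 := by
    rw [hnormsq, mul_add]
    exact add_le_add (mul_le_mul_of_nonneg_left hanorm2 hγ) hbnorm2
  -- combine
  have hn1Hnn : 0 ≤ n1H uH ^ 2 := by positivity
  have hgdnn : 0 ≤ γ * ‖divH uH‖ ^ 2 := by positivity
  have hCnn : 0 ≤ 2 * (cb * CP ^ 2 + K1) / ca := by positivity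
  have hK1nn : 0 ≤ K1 := by positivity
  have h1 : 0 ≤ (2 * (cb * CP ^ 2 + K1) / ca + K1) * (γ * ‖divH uH‖ ^ 2) :=
    mul_nonneg (by positivity) hgdnn
  have hexpand : (2 * (cb * CP ^ 2 + K1) / ca + K1 + 1) * (n1H uH ^ 2 + γ * ‖divH uH‖ ^ 2)
      = (2 * (cb * CP ^ 2 + K1) / ca) * n1H uH ^ 2 + K1 * n1H uH ^ 2 + n1H uH ^ 2
        + γ * ‖divH uH‖ ^ 2
        + (2 * (cb * CP ^ 2 + K1) / ca + K1) * (γ * ‖divH uH‖ ^ 2) := by ring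
  rw [hexpand]
  linarith only [hn1w, hdiv, h1, hn1Hnn, hgdnn]
end
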